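/- arXiv:1004.1653 — 2 statements merged into one kernel-verified Lean document; each statement's English description precedes it below -/
import Mathlib

section
/- The right light cone distance satisfies the triangle inequality: for all indecomposable objects X, Y, Z of the bounded derived category of an abelian Ext-finite category with Serre duality, d•(X,Z) ≤ d•(X,Y) + d•(Y,Z) whenever the right-hand sum is defined. -/
open CategoryTheory CategoryTheory.Limits CategoryTheory.Pretriangulated

namespace Paper

/-! ### A construction of the bounded derived category of an abelian category. -/

/-- An object of the homotopy category of an abelian category is (cochain-)bounded. -/
def IsBddObj {A : Type*} [Category A] [Abelian A]
    (X : HomotopyCategory A (ComplexShape.up ℤ)) : Prop :=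
  ∃ a b : ℤ, ∀ i : ℤ, (i < a ∨ b < i) → IsZero (X.as.X i)

/-- The bounded homotopy category `K^b(A)`. -/
abbrev KbCat (A : Type*) [Category A] [Abelian A] :=
  ObjectProperty.FullSubcategory (IsBddObj (A := A))

/-- Quasi-isomorphisms in the bounded homotopy category. -/
def qisW (A : Type*) [Category A] [Abelian A] : MorphismProperty (KbCat A) :=
  fun X Y f => HomotopyCategory.quasiIso A (ComplexShape.up ℤ) (X := X.obj) (Y := Y.obj) f.hom

/-- The bounded derived category `D^b(A)` of an abelian category `A`, constructed as the
localization of the bounded homotopy category at the quasi-isomorphisms. -/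
def Db (A : Type*) [Category A] [Abelian A] : Type _ := (qisW A).Localization

noncomputable instance (A : Type*) [Category A] [Abelian A] : Category (Db A) := by
  dsimp [Db]; infer_instance

/-- `D^b` of a category with explicitly given category and abelian structures. -/
def DbOf (H : Type*) (c : Category H) (a : Abelian H) : Type _ := @Db H c a

noncomputable instance (H : Type*) (c : Category H) (a : Abelian H) :
    Category (DbOf H c a) := by
  dsimp [DbOf]; infer_instance


variable {C : Type*} [Category C]

/-- Serre duality data on a `k`-linear category: a Serre functor `S` together with
isomorphisms `Hom(A,B) ≅ Hom(B, S A)*`, natural in both variables. -/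
structure SerreFunctorData (k : Type*) [Field k] (C : Type*) [Category C] [Preadditive C]
    [Linear k C] where
  S : C ≌ C
  equiv : ∀ A B : C, (A ⟶ B) ≃ₗ[k] Module.Dual k (B ⟶ S.functor.obj A)
  nat_right : ∀ (A B B' : C) (g : B ⟶ B') (u : A ⟶ B) (v : B' ⟶ S.functor.obj A),
    equiv A B' (u ≫ g) v = equiv A B u (g ≫ v)
  nat_left : ∀ (A A' B : C) (f : A' ⟶ A) (u : A ⟶ B) (v : B ⟶ S.functor.obj A'),
    equiv A' B (f ≫ u) v = equiv A B u (v ≫ S.functor.map f)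

/-- The `n`-th power (n ∈ ℤ) of an auto-equivalence, on objects. -/
def tpow (τ : C ≌ C) : ℤ → C → C
  | Int.ofNat n, X => (fun Y => τ.functor.obj Y)^[n] X
  | Int.negSucc n, X => (fun Y => τ.inverse.obj Y)^[n + 1] X

section Paths
variable [Limits.HasZeroMorphisms C] [HasBinaryBiproducts C]

/-- One step of a path: a nonzero morphism between indecomposables. -/
def PathStep (A B : C) : Prop :=
  Indecomposable A ∧ Indecomposable B ∧ ∃ f : A ⟶ B, f ≠ 0

/-- There is a path (a chain of nonzero morphisms between indecomposables) from `X` to `Y`. -/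
def HasPath (X Y : C) : Prop := Relation.ReflTransGen (PathStep (C := C)) X Y

/-- The right light cone distance `d•(X,Y) = inf { n : ℤ | there is a path from X to τ^{-n} Y }`,
as an extended real number (so that the infimum of the empty set is `⊤` and `-∞` can occur). -/
noncomputable def lcd (τ : C ≌ C) (X Y : C) : EReal :=
  sInf {e : EReal | ∃ n : ℤ, e = ((n : ℝ) : EReal) ∧ HasPath X (tpow τ (-n) Y)}

/-- The round trip distance. -/
noncomputable def rtd (τ : C ≌ C) (X Y : C) : EReal := lcd τ X Y + lcd τ Y X

/-- Right light cone distance from a set to an object. -/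
noncomputable def lcdFrom (τ : C ≌ C) (T : Set C) (X : C) : EReal :=
  sInf {e : EReal | ∃ t ∈ T, e = lcd τ t X}

/-- Right light cone distance from an object to a set. -/
noncomputable def lcdTo (τ : C ≌ C) (X : C) (T : Set C) : EReal :=
  sInf {e : EReal | ∃ t ∈ T, e = lcd τ X t}

/-- The round trip distance between a set and an object. -/
noncomputable def rtdSet (τ : C ≌ C) (T : Set C) (X : C) : EReal :=
  lcdFrom τ T X + lcdTo τ X T

/-- An object is directing if there is no nontrivial path from it to itself, i.e. no path
from `X` to `X` passing in order through objects `Y`, `Z` admitting a nonzero radical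
(= non-invertible) morphism `Y ⟶ Z`. -/
def Directing (X : C) : Prop :=
  ¬ ∃ Y Z : C, HasPath X Y ∧ HasPath Y Z ∧ HasPath Z X ∧
      Indecomposable Y ∧ Indecomposable Z ∧ ∃ f : Y ⟶ Z, f ≠ 0 ∧ ¬ IsIso f

end Paths

end Paper

namespace Paper

open CategoryTheory CategoryTheory.Limits

section Aux

variable {C : Type*} [Category C] [Preadditive C] [HasBinaryBiproducts C]

lemma indec_obj (e : C ≌ C) {X : C} (h : Indecomposable X) :
    Indecomposable (e.functor.obj X) := by
  haveI := preservesBinaryBiproducts_of_preservesBinaryProducts e.inverse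
  constructor
  · intro hz
    exact h.1 ((e.inverse.map_isZero hz).of_iso (e.unitIso.app X))
  · intro U V i
    have i' : X ≅ e.inverse.obj U ⊞ e.inverse.obj V :=
      e.unitIso.app X ≪≫ e.inverse.mapIso i ≪≫ e.inverse.mapBiprod U V
    rcases h.2 _ _ i' with hU | hV
    · exact Or.inl ((e.functor.map_isZero hU).of_iso (e.counitIso.app U).symm)
    · exact Or.inr ((e.functor.map_isZero hV).of_iso (e.counitIso.app V).symm)

lemma pathStep_obj (e : C ≌ C) {X Y : C} (h : PathStep X Y) :
    PathStep (e.functor.obj X) (e.functor.obj Y) := by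
  obtain ⟨hX, hY, f, hf⟩ := h
  exact ⟨indec_obj e hX, indec_obj e hY, e.functor.map f,
    fun hz => hf ((e.functor.map_eq_zero_iff).mp hz)⟩

lemma hasPath_obj (e : C ≌ C) {X Y : C} (h : HasPath X Y) :
    HasPath (e.functor.obj X) (e.functor.obj Y) :=
  Relation.ReflTransGen.lift (fun W => e.functor.obj W) (fun _ _ hab => pathStep_obj e hab) X Y h

lemma hasPath_iterate (e : C ≌ C) (n : ℕ) {X Y : C} (h : HasPath X Y) :
    HasPath ((fun W => e.functor.obj W)^[n] X) ((fun W => e.functor.obj W)^[n] Y) := by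
  induction n with
  | zero => exact h
  | succ n ih =>
      rw [Function.iterate_succ_apply', Function.iterate_succ_apply']
      exact hasPath_obj e ih

lemma indec_iterate (e : C ≌ C) (n : ℕ) {X : C} (h : Indecomposable X) :
    Indecomposable ((fun W => e.functor.obj W)^[n] X) := by
  induction n with
  | zero => exact h
  | succ n ih =>
      rw [Function.iterate_succ_apply']
      exact indec_obj e ih

lemma hasPath_tpow (τ : C ≌ C) (a : ℤ) {X Y : C} (h : HasPath X Y) :
    HasPath (tpow τ a X) (tpow τ a Y) := by
  cases a with
  | ofNat n => exact hasPath_iterate τ n h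
  | negSucc n => exact hasPath_iterate τ.symm (n + 1) h

lemma indec_tpow (τ : C ≌ C) (a : ℤ) {X : C} (h : Indecomposable X) :
    Indecomposable (tpow τ a X) := by
  cases a with
  | ofNat n => exact indec_iterate τ n h
  | negSucc n => exact indec_iterate τ.symm (n + 1) h

def tpow_succ (τ : C ≌ C) (a : ℤ) (X : C) :
    tpow τ (a + 1) X ≅ τ.functor.obj (tpow τ a X) := by
  cases a with
  | ofNat n =>
      rw [show (Int.ofNat n + 1 : ℤ) = Int.ofNat (n + 1) from rfl]
      exact eqToIso (Function.iterate_succ_apply' _ n X)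
  | negSucc n =>
      cases n with
      | zero =>
          rw [show (Int.negSucc 0 + 1 : ℤ) = Int.ofNat 0 from rfl]
          exact (τ.counitIso.app X).symm
      | succ m =>
          rw [show (Int.negSucc (m + 1) + 1 : ℤ) = Int.negSucc m from rfl]
          have h : tpow τ (Int.negSucc (m + 1)) X
              = τ.inverse.obj (tpow τ (Int.negSucc m) X) :=
            Function.iterate_succ_apply' _ (m + 1) X
          rw [h]
          exact (τ.counitIso.app _).symm

def tpow_pred (τ : C ≌ C) (a : ℤ) (X : C) :
    tpow τ (a - 1) X ≅ τ.inverse.obj (tpow τ a X) := by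
  cases a with
  | ofNat n =>
      cases n with
      | zero =>
          rw [show (Int.ofNat 0 - 1 : ℤ) = Int.negSucc 0 from rfl]
          exact Iso.refl _
      | succ m =>
          rw [show (Int.ofNat (m + 1) - 1 : ℤ) = Int.ofNat m by simp only [Int.ofNat_eq_natCast]; push_cast; ring]
          have h : tpow τ (Int.ofNat (m + 1)) X
              = τ.functor.obj (tpow τ (Int.ofNat m) X) :=
            Function.iterate_succ_apply' _ m X
          rw [h]
          exact τ.unitIso.app _
  | negSucc n =>
      rw [show (Int.negSucc n - 1 : ℤ) = Int.negSucc (n + 1) from rfl]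
      exact eqToIso (Function.iterate_succ_apply' _ (n + 1) X)

lemma tpow_add (τ : C ≌ C) (a b : ℤ) (X : C) :
    Nonempty (tpow τ (a + b) X ≅ tpow τ a (tpow τ b X)) := by
  induction a using Int.induction_on with
  | zero => rw [zero_add]; exact ⟨Iso.refl _⟩
  | succ i ih =>
      obtain ⟨e⟩ := ih
      rw [show ((i : ℤ) + 1 + b) = ((i : ℤ) + b) + 1 by ring]
      exact ⟨tpow_succ τ ((i : ℤ) + b) X ≪≫ τ.functor.mapIso e ≪≫
        (tpow_succ τ (i : ℤ) (tpow τ b X)).symm⟩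
  | pred i ih =>
      obtain ⟨e⟩ := ih
      rw [show (-(i : ℤ) - 1 + b) = (-(i : ℤ) + b) - 1 by ring]
      exact ⟨tpow_pred τ (-(i : ℤ) + b) X ≪≫ τ.inverse.mapIso e ≪≫
        (tpow_pred τ (-(i : ℤ)) (tpow τ b X)).symm⟩

lemma hasPath_of_iso {X Y Y' : C} (hX : Indecomposable X) (hY' : Indecomposable Y')
    (h : HasPath X Y) (e : Y ≅ Y') : HasPath X Y' := by
  have hne : ∀ {W W' : C} (i : W ≅ W'), ¬ IsZero W → i.hom ≠ 0 := by
    intro W W' i hW hz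
    exact hW (by rw [IsZero.iff_id_eq_zero, ← i.hom_inv_id, hz, zero_comp])
  rcases Relation.ReflTransGen.cases_tail h with rfl | ⟨c, hc, hstep⟩
  · exact Relation.ReflTransGen.single ⟨hX, hY', e.hom, hne e hX.1⟩
  · obtain ⟨hcI, hYI, f, hf⟩ := hstep
    refine hc.tail ⟨hcI, hY', f ≫ e.hom, fun hz => hf ?_⟩
    have := congrArg (fun g => g ≫ e.inv) hz
    simpa using this

lemma hasPath_comp_tpow (τ : C ≌ C) {X Y Z : C} (hX : Indecomposable X)
    (hZ : Indecomposable Z) {m n : ℤ} (h1 : HasPath X (tpow τ (-m) Y))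
    (h2 : HasPath Y (tpow τ (-n) Z)) : HasPath X (tpow τ (-(m + n)) Z) := by
  have h := Relation.ReflTransGen.trans h1 (hasPath_tpow τ (-m) h2)
  have he : Nonempty (tpow τ (-m) (tpow τ (-n) Z) ≅ tpow τ (-(m + n)) Z) := by
    rw [neg_add]
    obtain ⟨e⟩ := tpow_add τ (-m) (-n) Z
    exact ⟨e.symm⟩
  obtain ⟨e⟩ := he
  exact hasPath_of_iso hX (indec_tpow τ _ hZ) h e

lemma ereal_eq_bot_of_forall_int {x : EReal} (h : ∀ m : ℤ, x ≤ ((m : ℝ) : EReal)) :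
    x = ⊥ := by
  induction x using EReal.rec with
  | bot => rfl
  | coe r =>
      exfalso
      have h1 := h (⌊r⌋ - 1)
      rw [EReal.coe_le_coe_iff] at h1
      push_cast at h1
      have h2 := Int.floor_le r
      linarith
  | top => exact absurd (top_le_iff.mp (h 0)) (EReal.coe_ne_top _)

lemma lcd_le {τ : C ≌ C} {X Y : C} (n : ℤ) (h : HasPath X (tpow τ (-n) Y)) :
    lcd τ X Y ≤ ((n : ℝ) : EReal) :=
  sInf_le ⟨n, rfl, h⟩

lemma lcd_exists_of_ne_top {τ : C ≌ C} {X Y : C} (h : lcd τ X Y ≠ ⊤) :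
    ∃ n : ℤ, HasPath X (tpow τ (-n) Y) := by
  by_contra hne
  apply h
  have hempty : {e : EReal | ∃ n : ℤ, e = ((n : ℝ) : EReal) ∧ HasPath X (tpow τ (-n) Y)} = ∅ := by
    ext e
    simp only [Set.mem_setOf_eq, Set.mem_empty_iff_false, iff_false]
    rintro ⟨n, -, hn⟩
    exact hne ⟨n, hn⟩
  show sInf _ = ⊤
  rw [hempty, sInf_empty]

lemma lcd_unbounded_of_eq_bot {τ : C ≌ C} {X Y : C} (h : lcd τ X Y = ⊥) (M : ℤ) :
    ∃ m : ℤ, m ≤ M ∧ HasPath X (tpow τ (-m) Y) := by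
  by_contra hc
  push_neg at hc
  have hlb : ((M : ℝ) : EReal) ≤ lcd τ X Y := by
    apply le_sInf
    rintro e ⟨n, rfl, hn⟩
    have hMn : M ≤ n := by
      by_contra hlt
      push_neg at hlt
      exact hc n hlt.le hn
    exact EReal.coe_le_coe_iff.mpr (by exact_mod_cast hMn)
  rw [h] at hlb
  exact absurd (le_bot_iff.mp hlb) (EReal.coe_ne_bot _)

lemma lcd_cases (τ : C ≌ C) (X Y : C) :
    lcd τ X Y = ⊤ ∨ lcd τ X Y = ⊥ ∨
      ∃ n : ℤ, HasPath X (tpow τ (-n) Y) ∧ lcd τ X Y = ((n : ℝ) : EReal) := by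
  by_cases hne : ∃ n : ℤ, HasPath X (tpow τ (-n) Y)
  · by_cases hbdd : ∃ b : ℤ, ∀ z : ℤ, HasPath X (tpow τ (-z) Y) → b ≤ z
    · obtain ⟨lb, hlb, hmin⟩ := Int.exists_least_of_bdd hbdd hne
      refine Or.inr (Or.inr ⟨lb, hlb, le_antisymm (lcd_le lb hlb) ?_⟩)
      apply le_sInf
      rintro e ⟨n, rfl, hn⟩
      exact EReal.coe_le_coe_iff.mpr (by exact_mod_cast hmin n hn)
    · refine Or.inr (Or.inl (ereal_eq_bot_of_forall_int ?_))
      intro M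
      push_neg at hbdd
      obtain ⟨z, hz, hzM⟩ := hbdd M
      exact (lcd_le z hz).trans (EReal.coe_le_coe_iff.mpr (by exact_mod_cast hzM.le))
  · exact Or.inl (by
      by_contra h
      exact hne (lcd_exists_of_ne_top h))

end Aux

end Paper

namespace Paper

/-- the right light cone distance satisfies the triangle inequality
`d•(X,Z) ≤ d•(X,Y) + d•(Y,Z)` whenever the right-hand sum is defined. -/
theorem lcd_triangle_inequality
    (k : Type*) [Field k] [IsAlgClosed k]
    (A : Type*) [Category A] [Abelian A] [Linear k A]
    {C : Type*} [Category C] [Preadditive C] [Linear k C] [HasZeroObject C]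
    [HasShift C ℤ] [∀ n : ℤ, (shiftFunctor C n).Additive] [Pretriangulated C]
    [HasBinaryBiproducts C]
    -- `C` is the bounded derived category of the abelian category `A`
    (hdb : Nonempty (C ≌ Db A))
    -- Ext-finiteness of `A`, expressed as Hom-finiteness of `D^b(A)`
    (hfin : ∀ X Y : C, FiniteDimensional k (X ⟶ Y))
    -- Serre duality, and the Auslander–Reiten translate `τ` with `S ≅ τ ∘ [1]`
    (S : SerreFunctorData k C) (τ : C ≌ C)
    (hτ : Nonempty (S.S.functor ≅ τ.functor ⋙ shiftFunctor C (1 : ℤ)))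
    (X Y Z : C) (hX : Indecomposable X) (hY : Indecomposable Y) (hZ : Indecomposable Z)
    -- the sum `d•(X,Y) + d•(Y,Z)` is defined
    (hdef : ¬ (lcd τ X Y = ⊤ ∧ lcd τ Y Z = ⊥) ∧ ¬ (lcd τ X Y = ⊥ ∧ lcd τ Y Z = ⊤)) :
    lcd τ X Z ≤ lcd τ X Y + lcd τ Y Z := by
  rcases lcd_cases τ X Y with hXY | hXY | ⟨m, hm, hXY⟩
  · rw [hXY]
    have hne : lcd τ Y Z ≠ ⊥ := fun hb => hdef.1 ⟨hXY, hb⟩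
    rw [EReal.top_add_of_ne_bot hne]
    exact le_top
  · have hne : lcd τ Y Z ≠ ⊤ := fun ht => hdef.2 ⟨hXY, ht⟩
    obtain ⟨n₀, hn₀⟩ := lcd_exists_of_ne_top hne
    have hbot : lcd τ X Z = ⊥ := by
      apply ereal_eq_bot_of_forall_int
      intro M
      obtain ⟨m, hmle, hm⟩ := lcd_unbounded_of_eq_bot hXY (M - n₀)
      have hR := hasPath_comp_tpow τ hX hZ hm hn₀
      exact (lcd_le (m + n₀) hR).trans
        (EReal.coe_le_coe_iff.mpr (by exact_mod_cast by omega))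
    rw [hbot]
    exact bot_le
  · rcases lcd_cases τ Y Z with hYZ | hYZ | ⟨n, hn, hYZ⟩
    · rw [hXY, hYZ, EReal.add_top_of_ne_bot (EReal.coe_ne_bot _)]
      exact le_top
    · have hbot : lcd τ X Z = ⊥ := by
        apply ereal_eq_bot_of_forall_int
        intro M
        obtain ⟨n', hnle, hn'⟩ := lcd_unbounded_of_eq_bot hYZ (M - m)
        have hR := hasPath_comp_tpow τ hX hZ hm hn'
        exact (lcd_le (m + n') hR).trans
          (EReal.coe_le_coe_iff.mpr (by exact_mod_cast by omega))
      rw [hYZ, EReal.add_bot, hbot]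
    · rw [hXY, hYZ]
      have hR := hasPath_comp_tpow τ hX hZ hm hn
      refine (lcd_le (m + n) hR).trans_eq ?_
      norm_cast


end Paper
end

section
/- Let X, Y, Z be indecomposable objects of the bounded derived category of an Ext-finite abelian category with Serre duality such that d•(X,Z) = 0. Then for all nonzero f ∈ Hom(X,Y) and g ∈ Hom(Y,Z), the composition g∘f is nonzero. In particular, d•(X,Z) = 0 implies Hom(X,Z) ≠ 0. -/
open CategoryTheory CategoryTheory.Limits CategoryTheory.Pretriangulated

namespace Paper

section Auxiliary

variable {k : Type*} [Field k]
variable {C : Type*} [Category C] [Preadditive C] [Linear k C] [HasBinaryBiproducts C]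

lemma id_ne_zero_of_not_isZero {X : C} (h : ¬ IsZero X) : 𝟙 X ≠ 0 :=
  fun h' => h ((IsZero.iff_id_eq_zero X).mpr h')

lemma finrank_add_le_of_iso_biprod
    (hfin : ∀ X Y : C, FiniteDimensional k (X ⟶ Y))
    {W A B : C} (e : W ≅ A ⊞ B) :
    Module.finrank k (A ⟶ A) + Module.finrank k (B ⟶ B) ≤ Module.finrank k (W ⟶ W) := by
  haveI := hfin A A; haveI := hfin B B; haveI := hfin W W
  let Φ : ((A ⟶ A) × (B ⟶ B)) →ₗ[k] (W ⟶ W) :=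
    { toFun := fun ab => e.hom ≫ biprod.map ab.1 ab.2 ≫ e.inv
      map_add' := fun x y => by
        simp only [biprod.map_eq, Prod.fst_add, Prod.snd_add, Preadditive.add_comp,
          Preadditive.comp_add]
        abel
      map_smul' := fun a x => by
        simp only [biprod.map_eq, Prod.smul_fst, Prod.smul_snd, Linear.smul_comp,
          Linear.comp_smul, RingHom.id_apply, ← smul_add] }
  have hrec₁ : ∀ m : (A ⟶ A) × (B ⟶ B),
      biprod.inl ≫ (e.inv ≫ Φ m ≫ e.hom) ≫ biprod.fst = m.1 := by
    intro m; simp [Φ]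
  have hrec₂ : ∀ m : (A ⟶ A) × (B ⟶ B),
      biprod.inr ≫ (e.inv ≫ Φ m ≫ e.hom) ≫ biprod.snd = m.2 := by
    intro m; simp [Φ]
  have hinj : Function.Injective Φ := by
    intro x y hxy
    refine Prod.ext ?_ ?_
    · rw [← hrec₁ x, ← hrec₁ y, hxy]
    · rw [← hrec₂ x, ← hrec₂ y, hxy]
  have := LinearMap.finrank_le_finrank_of_injective hinj
  rwa [Module.finrank_prod] at this

lemma exists_indec_retract
    (hfin : ∀ X Y : C, FiniteDimensional k (X ⟶ Y)) :
    ∀ (n : ℕ) (W : C), Module.finrank k (W ⟶ W) ≤ n →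
    ∀ {Y Z : C} (g : Y ⟶ W) (h : W ⟶ Z), g ≫ h ≠ 0 →
    ∃ (U : C) (ι : U ⟶ W) (p : W ⟶ U), ι ≫ p = 𝟙 U ∧ Indecomposable U ∧
      (g ≫ p) ≫ (ι ≫ h) ≠ 0 := by
  intro n
  induction n with
  | zero =>
    intro W hW Y Z g h hgh
    exfalso
    haveI := hfin W W
    have : Module.finrank k (W ⟶ W) = 0 := le_antisymm hW (Nat.zero_le _)
    haveI : Subsingleton (W ⟶ W) := Module.finrank_zero_iff.mp this
    have hid : 𝟙 W = 0 := Subsingleton.elim _ _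
    apply hgh
    calc g ≫ h = g ≫ 𝟙 W ≫ h := by simp
      _ = 0 := by rw [hid]; simp
  | succ n ih =>
    intro W hW Y Z g h hgh
    by_cases hind : Indecomposable W
    · exact ⟨W, 𝟙 W, 𝟙 W, by simp, hind, by simpa using hgh⟩
    · have hWnz : ¬ IsZero W := by
        intro hz
        exact hgh (by rw [hz.eq_of_src h 0, comp_zero])
      have hdec : ¬ ∀ A B : C, (W ≅ A ⊞ B) → IsZero A ∨ IsZero B :=
        fun hall => hind ⟨hWnz, hall⟩
      simp only [not_forall] at hdec
      obtain ⟨A, B, e, hAB⟩ := hdec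
      push_neg at hAB
      obtain ⟨hAnz, hBnz⟩ := hAB
      haveI := hfin A A; haveI := hfin B B; haveI := hfin W W
      have hlt := finrank_add_le_of_iso_biprod hfin e
      have hApos : 0 < Module.finrank k (A ⟶ A) :=
        Module.finrank_pos_iff.mpr ⟨⟨𝟙 A, 0, id_ne_zero_of_not_isZero hAnz⟩⟩
      have hBpos : 0 < Module.finrank k (B ⟶ B) :=
        Module.finrank_pos_iff.mpr ⟨⟨𝟙 B, 0, id_ne_zero_of_not_isZero hBnz⟩⟩
      have hA : Module.finrank k (A ⟶ A) ≤ n := by omega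
      have hB : Module.finrank k (B ⟶ B) ≤ n := by omega
      have hsplit : g ≫ h =
          (g ≫ (e.hom ≫ biprod.fst)) ≫ ((biprod.inl ≫ e.inv) ≫ h)
          + (g ≫ (e.hom ≫ biprod.snd)) ≫ ((biprod.inr ≫ e.inv) ≫ h) := by
        have htot : (biprod.fst ≫ biprod.inl + biprod.snd ≫ biprod.inr : A ⊞ B ⟶ A ⊞ B)
            = 𝟙 (A ⊞ B) := biprod.total
        calc g ≫ h = g ≫ e.hom ≫ (𝟙 (A ⊞ B)) ≫ e.inv ≫ h := by simp
          _ = g ≫ e.hom ≫ (biprod.fst ≫ biprod.inl + biprod.snd ≫ biprod.inr)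
                ≫ e.inv ≫ h := by rw [htot]
          _ = _ := by
            simp only [Preadditive.add_comp, Preadditive.comp_add, Category.assoc]
      by_cases hfirst : (g ≫ (e.hom ≫ biprod.fst)) ≫ ((biprod.inl ≫ e.inv) ≫ h) ≠ 0
      · obtain ⟨U, ι', p', hcomp, hU, hne⟩ :=
          ih A hA (g ≫ (e.hom ≫ biprod.fst)) ((biprod.inl ≫ e.inv) ≫ h) hfirst
        refine ⟨U, ι' ≫ biprod.inl ≫ e.inv, e.hom ≫ biprod.fst ≫ p', ?_, hU, ?_⟩
        · calc (ι' ≫ biprod.inl ≫ e.inv) ≫ e.hom ≫ biprod.fst ≫ p'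
              = ι' ≫ (biprod.inl : A ⟶ A ⊞ B) ≫ (e.inv ≫ e.hom) ≫ biprod.fst ≫ p' := by
                simp only [Category.assoc]
            _ = 𝟙 U := by rw [e.inv_hom_id]; simp [hcomp]
        · intro hzero
          apply hne
          calc ((g ≫ (e.hom ≫ biprod.fst)) ≫ p') ≫ (ι' ≫ ((biprod.inl ≫ e.inv) ≫ h))
              = (g ≫ (e.hom ≫ biprod.fst ≫ p')) ≫ ((ι' ≫ biprod.inl ≫ e.inv) ≫ h) := by
                simp only [Category.assoc]
            _ = 0 := hzero
      · push_neg at hfirst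
        have hsecond : (g ≫ (e.hom ≫ biprod.snd)) ≫ ((biprod.inr ≫ e.inv) ≫ h) ≠ 0 := by
          intro hzero
          apply hgh
          rw [hsplit, hfirst, hzero, add_zero]
        obtain ⟨U, ι', p', hcomp, hU, hne⟩ :=
          ih B hB (g ≫ (e.hom ≫ biprod.snd)) ((biprod.inr ≫ e.inv) ≫ h) hsecond
        refine ⟨U, ι' ≫ biprod.inr ≫ e.inv, e.hom ≫ biprod.snd ≫ p', ?_, hU, ?_⟩
        · calc (ι' ≫ biprod.inr ≫ e.inv) ≫ e.hom ≫ biprod.snd ≫ p'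
              = ι' ≫ (biprod.inr : B ⟶ A ⊞ B) ≫ (e.inv ≫ e.hom) ≫ biprod.snd ≫ p' := by
                simp only [Category.assoc]
            _ = 𝟙 U := by rw [e.inv_hom_id]; simp [hcomp]
        · intro hzero
          apply hne
          calc ((g ≫ (e.hom ≫ biprod.snd)) ≫ p') ≫ (ι' ≫ ((biprod.inr ≫ e.inv) ≫ h))
              = (g ≫ (e.hom ≫ biprod.snd ≫ p')) ≫ ((ι' ≫ biprod.inr ≫ e.inv) ≫ h) := by
                simp only [Category.assoc]
            _ = 0 := hzero

variable (τ : C ≌ C)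

lemma equiv_functor_additive : τ.functor.Additive := by
  have : HasBinaryProducts C := hasBinaryProducts_of_hasBinaryBiproducts
  exact Functor.additive_of_preserves_binary_products _

lemma equiv_inverse_additive : τ.inverse.Additive := by
  have : HasBinaryProducts C := hasBinaryProducts_of_hasBinaryBiproducts
  exact Functor.additive_of_preserves_binary_products _

lemma equiv_map_ne_zero {A B : C} (u : A ⟶ B) (hu : u ≠ 0) : τ.functor.map u ≠ 0 := by
  haveI := equiv_functor_additive τ
  intro h
  exact hu (τ.functor.map_injective (by rw [h, CategoryTheory.Functor.map_zero]))

lemma equiv_obj_indec {A : C} (hA : Indecomposable A) :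
    Indecomposable (τ.functor.obj A) := by
  haveI := equiv_functor_additive τ
  haveI := equiv_inverse_additive τ
  constructor
  · intro hz
    apply hA.1
    have h1 : IsZero (τ.inverse.obj (τ.functor.obj A)) := τ.inverse.map_isZero hz
    exact IsZero.of_iso h1 (τ.unitIso.app A)
  · intro P Q e
    haveI : Limits.PreservesBinaryBiproducts τ.inverse := by
      have : HasBinaryProducts C := hasBinaryProducts_of_hasBinaryBiproducts
      exact Limits.preservesBinaryBiproducts_of_preservesBinaryProducts _
    have e' : A ≅ τ.inverse.obj P ⊞ τ.inverse.obj Q :=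
      τ.unitIso.app A ≪≫ τ.inverse.mapIso e ≪≫ τ.inverse.mapBiprod P Q
    rcases hA.2 _ _ e' with hP | hQ
    · exact Or.inl (IsZero.of_iso (τ.functor.map_isZero hP) (τ.counitIso.app P).symm)
    · exact Or.inr (IsZero.of_iso (τ.functor.map_isZero hQ) (τ.counitIso.app Q).symm)

lemma hasPath_map {A B : C} (hp : HasPath A B) :
    HasPath (τ.functor.obj A) (τ.functor.obj B) := by
  refine Relation.ReflTransGen.lift τ.functor.obj ?_ _ _ hp
  rintro a b ⟨ha, hb, u, hu⟩
  exact ⟨equiv_obj_indec τ ha, equiv_obj_indec τ hb,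
    τ.functor.map u, equiv_map_ne_zero τ u hu⟩

end Auxiliary

section MainLemma

variable {k : Type*} [Field k]
variable {C : Type*} [Category C] [Preadditive C] [Linear k C] [HasZeroObject C]
  [HasShift C ℤ] [∀ n : ℤ, (shiftFunctor C n).Additive] [Pretriangulated C]
  [HasBinaryBiproducts C]

/-- The key lemma: if `f : X ⟶ Y` and `g : Y ⟶ Z` are nonzero morphisms between
indecomposables whose composition vanishes, then by the cone construction and Serre duality
there is a path from `X` to `τ Z`. -/
lemma hasPath_of_comp_zero
    (hfin : ∀ X Y : C, FiniteDimensional k (X ⟶ Y))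
    (S : SerreFunctorData k C) (τ : C ≌ C)
    (hiso : S.S.functor ≅ τ.functor ⋙ shiftFunctor C (1 : ℤ))
    {X Y Z : C} (hX : Indecomposable X) (hY : Indecomposable Y) (hZ : Indecomposable Z)
    (f : X ⟶ Y) (g : Y ⟶ Z) (hf : f ≠ 0) (hg : g ≠ 0) (hfg : f ≫ g = 0) :
    HasPath X (τ.functor.obj Z) := by
  obtain ⟨Q, v, w, hT⟩ := Pretriangulated.distinguished_cocone_triangle f
  have hfv : f ≫ v = 0 := Pretriangulated.comp_distTriang_mor_zero₁₂ _ hT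
  obtain ⟨h₀, hh₀⟩ := Pretriangulated.Triangle.yoneda_exact₂ _ hT g hfg
  have h : Q ⟶ Z := h₀
  have hh : g = v ≫ h₀ := hh₀
  clear hh₀ h
  set h : Q ⟶ Z := h₀ with hhdef
  have hvh : v ≫ h ≠ 0 := by rw [← hh]; exact hg
  obtain ⟨U, ι, p, hιp, hU, hne⟩ :=
    exists_indec_retract hfin (Module.finrank k (Q ⟶ Q)) Q le_rfl v h hvh
  have hιh : ι ≫ h ≠ 0 := by
    intro h0
    exact hne (by rw [h0, comp_zero])
  by_cases hw : ι ≫ w = 0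
  · -- "splitting" case: we derive a contradiction with `f ≠ 0`.
    exfalso
    obtain ⟨j, hj₀⟩ := Pretriangulated.Triangle.coyoneda_exact₃ _ hT ι hw
    change U ⟶ Y at j
    have hj : ι = j ≫ v := hj₀
    have hjr : j ≫ (v ≫ p) = 𝟙 U := by rw [← Category.assoc, ← hj]; exact hιp
    obtain ⟨V, v₂, w₂, hT₂⟩ := Pretriangulated.distinguished_cocone_triangle j
    have hw₂j : w₂ ≫ (shiftFunctor C (1 : ℤ)).map j = 0 :=
      Pretriangulated.comp_distTriang_mor_zero₃₁ _ hT₂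
    have hw₂ : w₂ = 0 := by
      have hmap : (shiftFunctor C (1 : ℤ)).map j ≫ (shiftFunctor C (1 : ℤ)).map (v ≫ p)
          = 𝟙 _ := by
        rw [← CategoryTheory.Functor.map_comp, hjr, CategoryTheory.Functor.map_id]
      calc w₂ = w₂ ≫ (shiftFunctor C (1 : ℤ)).map j ≫
            (shiftFunctor C (1 : ℤ)).map (v ≫ p) := by rw [hmap, Category.comp_id]
        _ = (w₂ ≫ (shiftFunctor C (1 : ℤ)).map j) ≫
            (shiftFunctor C (1 : ℤ)).map (v ≫ p) := by rw [Category.assoc]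
        _ = 0 := by rw [hw₂j, zero_comp]
    rw [hw₂] at hT₂
    obtain ⟨e₀, he₁₀, he₂₀⟩ :=
      Pretriangulated.exists_iso_binaryBiproduct_of_distTriang _ hT₂ rfl
    let e : Y ≅ U ⊞ V := e₀
    have he₁ : j ≫ e.hom = biprod.inl := he₁₀
    have he₂ : v₂ = e.hom ≫ biprod.snd := he₂₀
    rcases hY.2 U V e with hUz | hVz
    · exact hιh (hUz.eq_of_src (ι ≫ h) 0)
    · have h2 : (f ≫ e.hom) ≫ biprod.snd = 0 := hVz.eq_of_tgt _ _
      have hfe : f ≫ e.hom = (f ≫ e.hom ≫ biprod.fst) ≫ biprod.inl := by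
        apply biprod.hom_ext
        · simp
        · simp only [Category.assoc, biprod.inl_snd, comp_zero]
          simpa using h2
      have hfc : f = (f ≫ e.hom ≫ biprod.fst) ≫ j := by
        calc f = (f ≫ e.hom) ≫ e.inv := by simp
          _ = ((f ≫ e.hom ≫ biprod.fst) ≫ biprod.inl) ≫ e.inv := by rw [hfe]
          _ = (f ≫ e.hom ≫ biprod.fst) ≫ (j ≫ e.hom) ≫ e.inv := by
              rw [he₁]; simp only [Category.assoc]
          _ = (f ≫ e.hom ≫ biprod.fst) ≫ j := by simp
      have hc0 : (f ≫ e.hom ≫ biprod.fst) = 0 := by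
        have h3 : f ≫ (v ≫ p) = 0 := by rw [← Category.assoc, hfv, zero_comp]
        have h4 : ((f ≫ e.hom ≫ biprod.fst) ≫ j) ≫ (v ≫ p) = 0 := by rw [← hfc]; exact h3
        calc (f ≫ e.hom ≫ biprod.fst)
            = (f ≫ e.hom ≫ biprod.fst) ≫ 𝟙 U := by rw [Category.comp_id]
          _ = (f ≫ e.hom ≫ biprod.fst) ≫ j ≫ (v ≫ p) := by rw [hjr]
          _ = ((f ≫ e.hom ≫ biprod.fst) ≫ j) ≫ (v ≫ p) := by
              simp only [Category.assoc]
          _ = 0 := h4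
      exact hf (by rw [hfc, hc0, zero_comp])
  · -- Serre duality case: there is a path `X ⟶ τ U ⟶ τ Z`.
    let θ : (shiftFunctor C (1 : ℤ)).obj X ≅ S.S.functor.obj (τ.inverse.obj X) :=
      ((shiftFunctor C (1 : ℤ)).mapIso (τ.counitIso.app X)).symm ≪≫
        (hiso.app (τ.inverse.obj X)).symm
    have hψ : (ι ≫ w) ≫ θ.hom ≠ 0 := by
      intro h0
      apply hw
      have := h0.trans (zero_comp (f := θ.hom)).symm
      exact (cancel_mono θ.hom).mp this
    obtain ⟨φ, hφ⟩ : ∃ φ : Module.Dual k (U ⟶ S.S.functor.obj (τ.inverse.obj X)),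
        φ ((ι ≫ w) ≫ θ.hom) ≠ 0 := by
      by_contra h'
      push_neg at h'
      exact hψ ((Module.forall_dual_apply_eq_zero_iff k _).mp h')
    set u : τ.inverse.obj X ⟶ U := (S.equiv (τ.inverse.obj X) U).symm φ with hu_def
    have hu : u ≠ 0 := by
      intro h0
      apply hφ
      have : φ = S.equiv (τ.inverse.obj X) U u :=
        (LinearEquiv.apply_symm_apply (S.equiv (τ.inverse.obj X) U) φ).symm
      rw [this, h0, map_zero]
      rfl
    haveI := equiv_functor_additive τ
    have hτU : Indecomposable (τ.functor.obj U) := equiv_obj_indec τ hU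
    have hτZ : Indecomposable (τ.functor.obj Z) := equiv_obj_indec τ hZ
    have hstep1 : PathStep X (τ.functor.obj U) := by
      refine ⟨hX, hτU, (τ.counitIso.app X).inv ≫ τ.functor.map u, ?_⟩
      intro h0
      apply equiv_map_ne_zero τ u hu
      have := congrArg (fun m => (τ.counitIso.app X).hom ≫ m) h0
      simpa using this
    have hstep2 : PathStep (τ.functor.obj U) (τ.functor.obj Z) :=
      ⟨hτU, hτZ, τ.functor.map (ι ≫ h), equiv_map_ne_zero τ _ hιh⟩
    exact Relation.ReflTransGen.head hstep1 (Relation.ReflTransGen.single hstep2)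

end MainLemma

/-- if `d•(X,Z) = 0` then every composition of nonzero morphisms
`X ⟶ Y ⟶ Z` is nonzero; in particular `Hom(X,Z) ≠ 0`. -/
theorem composition_nonzero_of_lcd_zero
    (k : Type*) [Field k] [IsAlgClosed k]
    (A : Type*) [Category A] [Abelian A] [Linear k A]
    {C : Type*} [Category C] [Preadditive C] [Linear k C] [HasZeroObject C]
    [HasShift C ℤ] [∀ n : ℤ, (shiftFunctor C n).Additive] [Pretriangulated C]
    [HasBinaryBiproducts C]
    -- `C` is the bounded derived category of the abelian category `A`
    (hdb : Nonempty (C ≌ Db A))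
    -- Ext-finiteness of `A`, expressed as Hom-finiteness of `D^b(A)`
    (hfin : ∀ X Y : C, FiniteDimensional k (X ⟶ Y))
    -- Serre duality, and the Auslander–Reiten translate `τ` with `S ≅ τ ∘ [1]`
    (S : SerreFunctorData k C) (τ : C ≌ C)
    (hτ : Nonempty (S.S.functor ≅ τ.functor ⋙ shiftFunctor C (1 : ℤ)))
    (X Y Z : C) (hX : Indecomposable X) (hY : Indecomposable Y) (hZ : Indecomposable Z)
    (h0 : lcd τ X Z = (0 : EReal)) :
    (∀ (f : X ⟶ Y) (g : Y ⟶ Z), f ≠ 0 → g ≠ 0 → f ≫ g ≠ 0) ∧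
    (∃ h : X ⟶ Z, h ≠ 0) := by
  obtain ⟨hiso⟩ := hτ
  -- There is no path from `X` to `τ Z`.
  have noPath : ¬ HasPath X (τ.functor.obj Z) := by
    intro hp
    have htp : tpow τ (-(-1 : ℤ)) Z = τ.functor.obj Z := rfl
    have hmem : (((-1 : ℤ) : ℝ) : EReal) ∈
        {e : EReal | ∃ n : ℤ, e = ((n : ℝ) : EReal) ∧ HasPath X (tpow τ (-n) Z)} :=
      ⟨-1, rfl, by rw [htp]; exact hp⟩
    have hle : lcd τ X Z ≤ (((-1 : ℤ) : ℝ) : EReal) := sInf_le hmem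
    rw [h0] at hle
    have : ((0 : ℝ) : EReal) ≤ (((-1 : ℤ) : ℝ) : EReal) := by rwa [EReal.coe_zero]
    have : (0 : ℝ) ≤ ((-1 : ℤ) : ℝ) := EReal.coe_le_coe_iff.mp this
    norm_num at this
  -- There is a path from `X` to `Z`.
  have hpathXZ : HasPath X Z := by
    have hlt : lcd τ X Z < ((1 : ℝ) : EReal) := by
      rw [h0, ← EReal.coe_zero]
      exact EReal.coe_lt_coe_iff.mpr (by norm_num)
    obtain ⟨e, hein, helt⟩ := sInf_lt_iff.mp hlt
    have hge : lcd τ X Z ≤ e := sInf_le hein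
    rw [h0] at hge
    obtain ⟨n, rfl, hpath⟩ := hein
    have h1 : (n : ℝ) < 1 := EReal.coe_lt_coe_iff.mp helt
    have h2 : (0 : ℝ) ≤ (n : ℝ) := EReal.coe_le_coe_iff.mp (by rwa [EReal.coe_zero])
    have hn1 : n < 1 := by exact_mod_cast h1
    have hn2 : 0 ≤ n := by exact_mod_cast h2
    have hn : n = 0 := by omega
    subst hn
    have htp : tpow τ (-(0 : ℤ)) Z = Z := rfl
    rwa [htp] at hpath
  constructor
  · intro f g hf hg hc
    exact noPath (hasPath_of_comp_zero hfin S τ hiso hX hY hZ f g hf hg hc)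
  · have main : ∀ (W : C), HasPath W Z → ∀ (c : X ⟶ W), c ≠ 0 → Indecomposable W →
        (∃ h : X ⟶ Z, h ≠ 0) := by
      intro W hp
      induction hp using Relation.ReflTransGen.head_induction_on with
      | refl => intro c hc _; exact ⟨c, hc⟩
      | head step rest ih =>
        intro c hc _
        obtain ⟨hWind, hW'ind, m, hm⟩ := step
        by_cases hcm : c ≫ m = 0
        · exfalso
          have hp1 := hasPath_of_comp_zero hfin S τ hiso hX hWind hW'ind c m hc hm hcm
          have hp2 := hasPath_map τ rest
          exact noPath (hp1.trans hp2)
        · exact ih (c ≫ m) hcm hW'ind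
    exact main X hpathXZ (𝟙 X) (id_ne_zero_of_not_isZero hX.1) hX

end Paper
end
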